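/- Let X be a binary source with Pr(X = 1) = p ∈ (0,1) and Pr(X = 0) = 1 − p, and let the distortion measure be δ(0,0)=1, δ(0,1)=2, δ(1,0)=1, δ(1,1)=0. Define the rate-distortion function R(D) as the minimum of the mutual information I(X;X̂) = Σ_{j,k ∈ {0,1}} p_j w(k|j) log₂( w(k|j) / (p_0 w(k|0) + p_1 w(k|1)) ) (with p_1 = p, p_0 = 1 − p) over all conditional probabilities w(k|j) ≥ 0 with w(0|j) + w(1|j) = 1 for each j and expected distortion Σ_{j,k} p_j w(k|j) δ(j,k) ≤ D. Then for every D with 1 − p ≤ D ≤ min{1, 2(1−p)}, R(D) = max{H(p) − H(D + p − 1), 0}, and R(D) = 0 for all D ≥ min{1, 2(1−p)}. -/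

import Mathlib

set_option maxHeartbeats 1000000

/-- The binary entropy function (base 2), with `H 0 = H 1 = 0`. -/
noncomputable def H2 (u : ℝ) : ℝ := -u * Real.logb 2 u - (1 - u) * Real.logb 2 (1 - u)

/-- The distortion measure `δ(0,0)=1, δ(0,1)=2, δ(1,0)=1, δ(1,1)=0`. -/
def dm (j k : Fin 2) : ℝ := if k = 0 then 1 else if j = 0 then 2 else 0

/-- The mutual information `I(X;X̂)` of the binary source `Pr(X=1) = p`,
`Pr(X=0) = 1-p` through the test channel `w` (`w j k = Pr(X̂=k | X=j)`). -/
noncomputable def mi (p : ℝ) (w : Fin 2 → Fin 2 → ℝ) : ℝ :=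
  ∑ j : Fin 2, ∑ k : Fin 2, (if j = 0 then 1 - p else p) * w j k *
    Real.logb 2 (w j k / ((1 - p) * w 0 k + p * w 1 k))

/-- The rate-distortion function `R(D)`: the minimum of `I(X;X̂)` over all conditional
probabilities `w(k|j) ≥ 0` with `w(0|j) + w(1|j) = 1` and expected distortion `≤ D`. -/
noncomputable def rdFun (p D : ℝ) : ℝ :=
  sInf {r : ℝ | ∃ w : Fin 2 → Fin 2 → ℝ,
    (∀ j k, 0 ≤ w j k) ∧ (∀ j, w j 0 + w j 1 = 1) ∧
    (∑ j : Fin 2, ∑ k : Fin 2, (if j = 0 then 1 - p else p) * w j k * dm j k) ≤ D ∧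
    r = mi p w}

lemma log2_pos : (0:ℝ) < Real.log 2 := Real.log_pos one_lt_two

lemma H2_expand (u : ℝ) : H2 u = (-(u * Real.log u) - (1-u) * Real.log (1-u)) / Real.log 2 := by
  simp [H2, Real.logb]; ring

lemma H2_sym (p : ℝ) : H2 (1-p) = H2 p := by
  have h : 1 - (1-p) = p := by ring
  rw [H2, h, H2]; ring

lemma mi_expand (p : ℝ) (w : Fin 2 → Fin 2 → ℝ) :
    mi p w = ((1-p) * w 0 0 * Real.log (w 0 0 / ((1-p) * w 0 0 + p * w 1 0))
      + (1-p) * w 0 1 * Real.log (w 0 1 / ((1-p) * w 0 1 + p * w 1 1))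
      + p * w 1 0 * Real.log (w 1 0 / ((1-p) * w 0 0 + p * w 1 0))
      + p * w 1 1 * Real.log (w 1 1 / ((1-p) * w 0 1 + p * w 1 1))) / Real.log 2 := by
  simp [mi, Fin.sum_univ_two, Real.logb]
  ring

lemma dist_expand (p : ℝ) (w : Fin 2 → Fin 2 → ℝ) :
    (∑ j : Fin 2, ∑ k : Fin 2, (if j = 0 then 1 - p else p) * w j k * dm j k)
      = (1-p) * w 0 0 + 2 * ((1-p) * w 0 1) + p * w 1 0 := by
  simp [dm, Fin.sum_univ_two]
  ring

lemma kl_term {a b : ℝ} (ha : 0 ≤ a) (hb : 0 ≤ b) (h : 0 < a → 0 < b) :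
    a - b ≤ a * Real.log (a / b) := by
  rcases eq_or_lt_of_le ha with h0 | h0
  · simpa [← h0] using hb
  · have hb' := h h0
    have h1 : Real.log (b / a) ≤ b / a - 1 := Real.log_le_sub_one_of_pos (by positivity)
    have hlog : Real.log (a / b) = - Real.log (b / a) := by
      rw [← Real.log_inv]; congr 1; field_simp
    have h2 : a * Real.log (b / a) ≤ a * (b / a - 1) :=
      mul_le_mul_of_nonneg_left h1 h0.le
    have h3 : a * (b / a - 1) = b - a := by field_simp
    rw [hlog]; nlinarith

lemma term_split {pj w m r : ℝ} (hpj : 0 < pj) (hw : 0 ≤ w) (hm : pj * w ≤ m) (hr : 0 < r) :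
    pj * w * Real.log (w / m) =
      pj * w * Real.log ((pj * w) / (m * r)) + pj * w * Real.log (r / pj) := by
  rcases eq_or_lt_of_le hw with h0 | h0
  · simp [← h0]
  · have hm' : 0 < m := lt_of_lt_of_le (by positivity) hm
    rw [Real.log_div (by positivity : (0:ℝ) < w).ne' hm'.ne',
        Real.log_div (by positivity : (0:ℝ) < pj * w).ne' (by positivity : (0:ℝ) < m * r).ne',
        Real.log_div hr.ne' hpj.ne',
        Real.log_mul hpj.ne' h0.ne', Real.log_mul hm'.ne' hr.ne']
    ring

lemma mi_nonneg (p : ℝ) (hp : 0 < p) (hp1 : p < 1) (w : Fin 2 → Fin 2 → ℝ)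
    (hw : ∀ j k, 0 ≤ w j k) (hrow : ∀ j, w j 0 + w j 1 = 1) : 0 ≤ mi p w := by
  have h1p : (0:ℝ) < 1 - p := by linarith
  rw [mi_expand]
  apply div_nonneg _ log2_pos.le
  have e00 : w 0 0 / ((1-p) * w 0 0 + p * w 1 0)
      = ((1-p) * w 0 0) / ((1-p) * ((1-p) * w 0 0 + p * w 1 0)) :=
    (mul_div_mul_left _ _ h1p.ne').symm
  have e01 : w 0 1 / ((1-p) * w 0 1 + p * w 1 1)
      = ((1-p) * w 0 1) / ((1-p) * ((1-p) * w 0 1 + p * w 1 1)) :=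
    (mul_div_mul_left _ _ h1p.ne').symm
  have e10 : w 1 0 / ((1-p) * w 0 0 + p * w 1 0)
      = (p * w 1 0) / (p * ((1-p) * w 0 0 + p * w 1 0)) :=
    (mul_div_mul_left _ _ hp.ne').symm
  have e11 : w 1 1 / ((1-p) * w 0 1 + p * w 1 1)
      = (p * w 1 1) / (p * ((1-p) * w 0 1 + p * w 1 1)) :=
    (mul_div_mul_left _ _ hp.ne').symm
  rw [e00, e01, e10, e11]
  have n00 := hw 0 0; have n01 := hw 0 1; have n10 := hw 1 0; have n11 := hw 1 1
  have k00 := kl_term (a := (1-p) * w 0 0) (b := (1-p) * ((1-p) * w 0 0 + p * w 1 0))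
    (mul_nonneg h1p.le n00) (mul_nonneg h1p.le (by nlinarith))
    (fun h => by nlinarith [mul_pos h1p h, mul_nonneg h1p.le (mul_nonneg hp.le n10)])
  have k01 := kl_term (a := (1-p) * w 0 1) (b := (1-p) * ((1-p) * w 0 1 + p * w 1 1))
    (mul_nonneg h1p.le n01) (mul_nonneg h1p.le (by nlinarith))
    (fun h => by nlinarith [mul_pos h1p h, mul_nonneg h1p.le (mul_nonneg hp.le n11)])
  have k10 := kl_term (a := p * w 1 0) (b := p * ((1-p) * w 0 0 + p * w 1 0))
    (mul_nonneg hp.le n10) (mul_nonneg hp.le (by nlinarith))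
    (fun h => by nlinarith [mul_pos hp h, mul_nonneg hp.le (mul_nonneg h1p.le n00)])
  have k11 := kl_term (a := p * w 1 1) (b := p * ((1-p) * w 0 1 + p * w 1 1))
    (mul_nonneg hp.le n11) (mul_nonneg hp.le (by nlinarith))
    (fun h => by nlinarith [mul_pos hp h, mul_nonneg hp.le (mul_nonneg h1p.le n01)])
  have hr0 := hrow 0
  have hr1 := hrow 1
  nlinarith [k00, k01, k10, k11]

lemma mi_lb (p d : ℝ) (hp : 0 < p) (hp1 : p < 1) (hd0 : 0 < d) (hd2 : d ≤ 1/2)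
    (w : Fin 2 → Fin 2 → ℝ) (hw : ∀ j k, 0 ≤ w j k) (hrow : ∀ j, w j 0 + w j 1 = 1)
    (hdw : (1-p) * w 0 1 + p * w 1 0 ≤ d) :
    H2 p - H2 d ≤ mi p w := by
  have h1p : (0:ℝ) < 1 - p := by linarith
  have hd1 : (0:ℝ) < 1 - d := by linarith
  have n00 := hw 0 0; have n01 := hw 0 1; have n10 := hw 1 0; have n11 := hw 1 1
  have hr0 := hrow 0; have hr1 := hrow 1
  rw [H2_expand p, H2_expand d, mi_expand, div_sub_div_same]
  rw [div_le_div_iff_of_pos_right log2_pos]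
  have hm0 : (1-p) * w 0 0 ≤ (1-p) * w 0 0 + p * w 1 0 := by nlinarith
  have hm0' : p * w 1 0 ≤ (1-p) * w 0 0 + p * w 1 0 := by nlinarith
  have hm1 : (1-p) * w 0 1 ≤ (1-p) * w 0 1 + p * w 1 1 := by nlinarith
  have hm1' : p * w 1 1 ≤ (1-p) * w 0 1 + p * w 1 1 := by nlinarith
  have s00 := term_split (pj := 1-p) (w := w 0 0) (m := (1-p) * w 0 0 + p * w 1 0)
    (r := 1-d) h1p n00 hm0 hd1
  have s01 := term_split (pj := 1-p) (w := w 0 1) (m := (1-p) * w 0 1 + p * w 1 1)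
    (r := d) h1p n01 hm1 hd0
  have s10 := term_split (pj := p) (w := w 1 0) (m := (1-p) * w 0 0 + p * w 1 0)
    (r := d) hp n10 hm0' hd0
  have s11 := term_split (pj := p) (w := w 1 1) (m := (1-p) * w 0 1 + p * w 1 1)
    (r := 1-d) hp n11 hm1' hd1
  rw [s00, s01, s10, s11]
  have kl00 := kl_term (a := (1-p) * w 0 0) (b := ((1-p) * w 0 0 + p * w 1 0) * (1-d))
    (mul_nonneg h1p.le n00) (mul_nonneg (by nlinarith) hd1.le)
    (fun h => mul_pos (lt_of_lt_of_le h hm0) hd1)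
  have kl01 := kl_term (a := (1-p) * w 0 1) (b := ((1-p) * w 0 1 + p * w 1 1) * d)
    (mul_nonneg h1p.le n01) (mul_nonneg (by nlinarith) hd0.le)
    (fun h => mul_pos (lt_of_lt_of_le h hm1) hd0)
  have kl10 := kl_term (a := p * w 1 0) (b := ((1-p) * w 0 0 + p * w 1 0) * d)
    (mul_nonneg hp.le n10) (mul_nonneg (by nlinarith) hd0.le)
    (fun h => mul_pos (lt_of_lt_of_le h hm0') hd0)
  have kl11 := kl_term (a := p * w 1 1) (b := ((1-p) * w 0 1 + p * w 1 1) * (1-d))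
    (mul_nonneg hp.le n11) (mul_nonneg (by nlinarith) hd1.le)
    (fun h => mul_pos (lt_of_lt_of_le h hm1') hd1)
  have hasum : (1-p) * w 0 0 + (1-p) * w 0 1 + p * w 1 0 + p * w 1 1 = 1 := by
    linear_combination (1-p) * hr0 + p * hr1
  have hKL : 0 ≤ (1-p) * w 0 0 * Real.log ((1-p) * w 0 0 / (((1-p) * w 0 0 + p * w 1 0) * (1-d)))
      + (1-p) * w 0 1 * Real.log ((1-p) * w 0 1 / (((1-p) * w 0 1 + p * w 1 1) * d))
      + p * w 1 0 * Real.log (p * w 1 0 / (((1-p) * w 0 0 + p * w 1 0) * d))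
      + p * w 1 1 * Real.log (p * w 1 1 / (((1-p) * w 0 1 + p * w 1 1) * (1-d))) := by
    linarith [kl00, kl01, kl10, kl11]
  have l1 : Real.log ((1-d) / (1-p)) = Real.log (1-d) - Real.log (1-p) :=
    Real.log_div hd1.ne' h1p.ne'
  have l2 : Real.log (d / (1-p)) = Real.log d - Real.log (1-p) :=
    Real.log_div hd0.ne' h1p.ne'
  have l3 : Real.log (d / p) = Real.log d - Real.log p :=
    Real.log_div hd0.ne' hp.ne'
  have l4 : Real.log ((1-d) / p) = Real.log (1-d) - Real.log p :=
    Real.log_div hd1.ne' hp.ne'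
  rw [l1, l2, l3, l4]
  have hmono : Real.log d ≤ Real.log (1-d) :=
    Real.log_le_log hd0 (by linarith)
  have hprod : 0 ≤ (d - ((1-p) * w 0 1 + p * w 1 0)) * (Real.log (1-d) - Real.log d) :=
    mul_nonneg (by linarith) (by linarith)
  have hS : (1-p) * w 0 0 * (Real.log (1-d) - Real.log (1-p))
      + (1-p) * w 0 1 * (Real.log d - Real.log (1-p))
      + p * w 1 0 * (Real.log d - Real.log p)
      + p * w 1 1 * (Real.log (1-d) - Real.log p)
      = (1 - ((1-p) * w 0 1 + p * w 1 0)) * Real.log (1-d)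
        + ((1-p) * w 0 1 + p * w 1 0) * Real.log d
        - (1-p) * Real.log (1-p) - p * Real.log p := by
    linear_combination ((1-p) * (Real.log (1-d) - Real.log (1-p))) * hr0
      + (p * (Real.log (1-d) - Real.log p)) * hr1
  linarith [hKL, hprod, hS]

lemma mi_id (p : ℝ) (hp : 0 < p) (hp1 : p < 1) :
    mi p (fun j k => if j = k then 1 else 0) = H2 p := by
  have h1p : (0:ℝ) < 1 - p := by linarith
  rw [mi_expand, H2_expand]
  norm_num
  ring

lemma mi_const0 (p : ℝ) : mi p (fun _ k => if k = 0 then 1 else 0) = 0 := by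
  rw [mi_expand]
  norm_num

lemma mi_const1 (p : ℝ) : mi p (fun _ k => if k = 0 then 0 else 1) = 0 := by
  rw [mi_expand]
  norm_num

lemma achieve (p d : ℝ) (hp : 0 < p) (hp1 : p < 1) (hd0 : 0 < d) (hdp : d < p)
    (hdq : d < 1 - p) :
    ∃ w : Fin 2 → Fin 2 → ℝ, (∀ j k, 0 ≤ w j k) ∧ (∀ j, w j 0 + w j 1 = 1) ∧
      ((1-p) * w 0 0 + 2 * ((1-p) * w 0 1) + p * w 1 0 = 1 - p + d) ∧
      mi p w = H2 p - H2 d := by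
  have h1p : (0:ℝ) < 1 - p := by linarith
  have h2d : (0:ℝ) < 1 - 2*d := by linarith
  have h2d' : (1:ℝ) - d*2 ≠ 0 := by linarith
  have hd1 : (0:ℝ) < 1 - d := by linarith
  set q0 : ℝ := (1-p-d)/(1-2*d) with hq0def
  set q1 : ℝ := (p-d)/(1-2*d) with hq1def
  have hq0 : 0 < q0 := by
    rw [hq0def]
    have : 0 < 1-p-d := by linarith
    positivity
  have hq1 : 0 < q1 := by
    rw [hq1def]
    have : 0 < p - d := by linarith
    positivity
  refine ⟨fun j k => if j = 0 then (if k = 0 then q0*(1-d)/(1-p) else q1*d/(1-p))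
    else (if k = 0 then q0*d/p else q1*(1-d)/p), ?_, ?_, ?_, ?_⟩
  · intro j k
    fin_cases j <;> fin_cases k <;> simp <;> positivity
  · intro j
    fin_cases j <;> simp
    · rw [hq0def, hq1def]; field_simp; ring
    · rw [hq0def, hq1def]; field_simp; ring
  · norm_num
    rw [hq0def, hq1def]; field_simp; ring
  · rw [mi_expand]
    norm_num
    have hm0 : (1-p) * (q0*(1-d)/(1-p)) + p * (q0*d/p) = q0 := by field_simp; ring
    have hm1 : (1-p) * (q1*d/(1-p)) + p * (q1*(1-d)/p) = q1 := by field_simp; ring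
    rw [hm0, hm1]
    have e00 : q0*(1-d)/(1-p)/q0 = (1-d)/(1-p) := by field_simp
    have e01 : q1*d/(1-p)/q1 = d/(1-p) := by field_simp
    have e10 : q0*d/p/q0 = d/p := by field_simp
    have e11 : q1*(1-d)/p/q1 = (1-d)/p := by field_simp
    rw [e00, e01, e10, e11]
    rw [Real.log_div hd1.ne' h1p.ne', Real.log_div hd0.ne' h1p.ne',
        Real.log_div hd0.ne' hp.ne', Real.log_div hd1.ne' hp.ne']
    rw [H2_expand, H2_expand, div_sub_div_same]
    congr 1
    rw [hq0def, hq1def]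
    field_simp
    ring

/-- For a binary source with `Pr(X=1) = p ∈ (0,1)` and the distortion
measure `δ(0,0)=1, δ(0,1)=2, δ(1,0)=1, δ(1,1)=0`: for every `D` with
`1-p ≤ D ≤ min {1, 2(1-p)}`, `R(D) = max {H(p) - H(D+p-1), 0}`, and `R(D) = 0` for all
`D ≥ min {1, 2(1-p)}`. -/
theorem stmt_14 (p : ℝ) (hp : 0 < p) (hp1 : p < 1) :
    (∀ D, 1 - p ≤ D → D ≤ min 1 (2 * (1 - p)) →
        rdFun p D = max (H2 p - H2 (D + p - 1)) 0) ∧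
      (∀ D, min 1 (2 * (1 - p)) ≤ D → rdFun p D = 0) := by
  have h1p : (0:ℝ) < 1 - p := by linarith
  set SD : ℝ → Set ℝ := fun D => {r : ℝ | ∃ w : Fin 2 → Fin 2 → ℝ,
    (∀ j k, 0 ≤ w j k) ∧ (∀ j, w j 0 + w j 1 = 1) ∧
    (∑ j : Fin 2, ∑ k : Fin 2, (if j = 0 then 1 - p else p) * w j k * dm j k) ≤ D ∧
    r = mi p w} with hSDdef
  have hrd : ∀ D, rdFun p D = sInf (SD D) := fun D => rfl
  have hlb0 : ∀ D, ∀ r ∈ SD D, (0:ℝ) ≤ r := by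
    rintro D r ⟨w, hw, hrow, -, rfl⟩
    exact mi_nonneg p hp hp1 w hw hrow
  have hchar : ∀ D v, v ∈ SD D → (∀ r ∈ SD D, v ≤ r) → rdFun p D = v := by
    intro D v hv hlb
    rw [hrd D]
    exact le_antisymm (csInf_le ⟨v, hlb⟩ hv) (le_csInf ⟨v, hv⟩ hlb)
  have part2 : ∀ D, min 1 (2 * (1 - p)) ≤ D → rdFun p D = 0 := by
    intro D hD
    apply hchar D 0 _ (hlb0 D)
    rcases le_total 1 (2*(1-p)) with h | h
    · have hD1 : (1:ℝ) ≤ D := le_trans (le_of_eq (min_eq_left h).symm) hD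
      refine ⟨fun _ k => if k = 0 then 1 else 0, ?_, ?_, ?_, (mi_const0 p).symm⟩
      · intro j k; fin_cases k <;> norm_num
      · intro j; norm_num
      · rw [dist_expand]
        norm_num
        linarith
    · have hD1 : 2*(1-p) ≤ D := le_trans (le_of_eq (min_eq_right h).symm) hD
      refine ⟨fun _ k => if k = 0 then 0 else 1, ?_, ?_, ?_, (mi_const1 p).symm⟩
      · intro j k; fin_cases k <;> norm_num
      · intro j; norm_num
      · rw [dist_expand]
        norm_num
        linarith
  refine ⟨?_, part2⟩
  intro D hD1 hD2
  have hdp : D + p - 1 ≤ p := by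
    have := le_trans hD2 (min_le_left _ _); linarith
  have hdq : D + p - 1 ≤ 1 - p := by
    have := le_trans hD2 (min_le_right _ _); linarith
  have hd0 : 0 ≤ D + p - 1 := by linarith
  rcases eq_or_lt_of_le hd0 with h0 | h0
  · -- d = 0, D = 1 - p
    have hDeq : D = 1 - p := by linarith
    have hHd : H2 (D + p - 1) = 0 := by
      rw [← h0]
      simp [H2]
    have hidnn : ∀ j k : Fin 2, (0:ℝ) ≤ (fun j k => if j = k then (1:ℝ) else 0) j k := by
      intro j k; fin_cases j <;> fin_cases k <;> norm_num
    have hidrow : ∀ j : Fin 2, (fun j k => if j = k then (1:ℝ) else 0) j 0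
        + (fun j k => if j = k then (1:ℝ) else 0) j 1 = 1 := by
      intro j; fin_cases j <;> norm_num
    have hpos : 0 ≤ H2 p := by
      rw [← mi_id p hp hp1]
      exact mi_nonneg p hp hp1 _ hidnn hidrow
    rw [hHd, sub_zero, max_eq_left hpos]
    apply hchar
    · exact ⟨fun j k => if j = k then 1 else 0, hidnn, hidrow, by
        rw [dist_expand]; norm_num; linarith, (mi_id p hp hp1).symm⟩
    · rintro r ⟨w, hw, hrow, hdist, rfl⟩
      rw [dist_expand] at hdist
      have e' : (1-p) * (w 0 0 + w 0 1) = 1 - p := by rw [hrow 0]; ring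
      have key : (1-p) * w 0 1 + p * w 1 0 ≤ 0 := by
        rw [hDeq] at hdist
        nlinarith [e']
      have hw01 : w 0 1 = 0 := by
        nlinarith [mul_nonneg hp.le (hw 1 0), hw 0 1]
      have hw10 : w 1 0 = 0 := by
        nlinarith [mul_nonneg h1p.le (hw 0 1), hw 1 0]
      have hw00 : w 0 0 = 1 := by have := hrow 0; linarith
      have hw11 : w 1 1 = 1 := by have := hrow 1; linarith
      have hweq : w = fun j k => if j = k then 1 else 0 := by
        funext j k
        fin_cases j <;> fin_cases k <;> simp [hw00, hw01, hw10, hw11]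
      rw [hweq, mi_id p hp hp1]
  · by_cases hlt : D + p - 1 < p ∧ D + p - 1 < 1 - p
    · obtain ⟨w, hw, hrow, hdist, hmi⟩ := achieve p (D+p-1) hp hp1 h0 hlt.1 hlt.2
      have hmax : max (H2 p - H2 (D+p-1)) 0 = H2 p - H2 (D+p-1) :=
        max_eq_left (by rw [← hmi]; exact mi_nonneg p hp hp1 w hw hrow)
      rw [hmax]
      apply hchar
      · exact ⟨w, hw, hrow, by rw [dist_expand, hdist]; linarith, hmi.symm⟩
      · rintro r ⟨w', hw', hrow', hdist', rfl⟩
        apply mi_lb p (D+p-1) hp hp1 h0 (by linarith [hlt.1, hlt.2]) w' hw' hrow'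
        rw [dist_expand] at hdist'
        have e' : (1-p) * (w' 0 0 + w' 0 1) = 1 - p := by rw [hrow' 0]; ring
        nlinarith [e']
    · have hdm : D + p - 1 = p ∨ D + p - 1 = 1 - p := by
        rcases not_and_or.mp hlt with h | h
        · left; push_neg at h; linarith
        · right; push_neg at h; linarith
      have hH : H2 (D + p - 1) = H2 p := by
        rcases hdm with h | h
        · rw [h]
        · rw [h, H2_sym]
      have hDge : min 1 (2*(1-p)) ≤ D := by
        rcases hdm with h | h
        · have : D = 1 := by linarith
          rw [this]; exact min_le_left _ _
        · have : D = 2*(1-p) := by linarith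
          rw [this]; exact min_le_right _ _
      rw [part2 D hDge, hH]
      simp
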